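/- Let 𝖦_τ be the combinatorial fiber polyhedral complex of the family Π_n^+(Δ) → Π_n(Δ) over the relative interior of a cone cone(τ) having the ray cone(ρ) as a face. Then there is a well-defined retraction ψ : 𝖦_τ^0 → 𝖦_ρ^0 on 0-skeletons: for each marked vertex u_j, the image of the section σ_j over cone(τ) is a cone mapping isomorphically onto cone(τ), and it contains a unique ray over cone(ρ), which determines a unique vertex ψ(u_j) ∈ 𝖦_ρ^0. Moreover, for each vertex v of 𝒮_ρ, the set of labels of marked vertices in ψ^{-1}(v) equals I_v = m^{-1}(v). -/
import Mathlib


/-!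
STATEMENT 17 (the retraction `ψ : 𝖦_τ^0 → 𝖦_ρ^0`, Section 5.2): for a cone
`cone(τ)` of `Π_n(Δ)` having a ray `cone(ρ)` (over `ū ∈ Δ^n`) as a face, and
each marked vertex `u_i`, the image of the section `σ_i` over `cone(τ)` is a
cone of `Π_n^+(Δ)` mapping isomorphically (bijectively) under `p` onto
`cone(τ)`; it contains a unique point over `ū` on the ray `cone(ρ)`, whose
`x`-component is the vertex `ψ(u_i) = ū_i` of `𝖦_ρ^0`.  Moreover, for each
vertex `v` of `𝒮_ρ`, the set of labels of marked vertices in `ψ^{-1}(v)`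
equals `I_v = m^{-1}(v) = {i : ū_i = v}`.
-/

open scoped BigOperators

/-- `cone(Δ^n)`: tuples of `n` points of `ℝ_{≥0}^r` having equal coordinate
sums (common height). -/
def coneD (n r : ℕ) : Set (Fin n → Fin r → ℝ) :=
  {u | (∀ i j, 0 ≤ u i j) ∧ ∀ i i', ∑ j, u i j = ∑ j, u i' j}

/-- `cone(Δ × Δ^n)`: `(n+1)`-tuples, the extra point labelled `0 = none`. -/
def coneDP (n r : ℕ) : Set (Option (Fin n) → Fin r → ℝ) :=
  {w | (∀ a j, 0 ≤ w a j) ∧ ∀ a b, ∑ j, w a j = ∑ j, w b j}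

/-- Relation prescribed by a side choice. -/
def ordRel : Ordering → ℝ → ℝ → Prop
  | .lt, a, b => a ≤ b
  | .eq, a, b => a = b
  | .gt, a, b => b ≤ a

/-- Non-emptiness of the closed cell of the height-slice simplex determined by
a side choice `ε` relative to the hyperplanes `x_j = u_i^{(j)}`. -/
def cellNE {n r : ℕ} (u : Fin n → Fin r → ℝ) (ε : Fin n → Fin r → Ordering) : Prop :=
  ∃ x : Fin r → ℝ, (∀ j, 0 ≤ x j) ∧ (∀ i, ∑ j, x j = ∑ j, u i j) ∧
    ∀ i j, ordRel (ε i j) (x j) (u i j)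

/-- Two tuples have the same combinatorial type of marked simplex-lattice
subdivision when the corresponding cells are non-empty simultaneously. -/
def typeEquiv {n r : ℕ} (u u' : Fin n → Fin r → ℝ) : Prop :=
  ∀ ε : Fin n → Fin r → Ordering, cellNE u ε ↔ cellNE u' ε

/-- The cone of `Π_n(Δ)` determined by (the combinatorial type of) `u`:
the closure of its combinatorial-equivalence class. -/
def Cn {n r : ℕ} (u : Fin n → Fin r → ℝ) : Set (Fin n → Fin r → ℝ) :=
  closure {u' | u' ∈ coneD n r ∧ typeEquiv u u'}

/-- The projection `p : cone(Δ × Δ^n) → cone(Δ^n)`. -/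
def projP {n r : ℕ} (w : Option (Fin n) → Fin r → ℝ) : Fin n → Fin r → ℝ :=
  fun i => w (some i)

/-- Combinatorial equivalence for `(n+1)`-tuples: same type of the underlying
`n`-tuple, and the extra point `x = w none` compares identically with the
hyperplanes `x_j = u_i^{(j)}` and the boundary `x_j = 0`. -/
def wEquiv {n r : ℕ} (w w' : Option (Fin n) → Fin r → ℝ) : Prop :=
  typeEquiv (projP w) (projP w') ∧
  (∀ j, w none j = 0 ↔ w' none j = 0) ∧
  ∀ i j, (w none j ≤ w (some i) j ↔ w' none j ≤ w' (some i) j) ∧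
         (w (some i) j ≤ w none j ↔ w' (some i) j ≤ w' none j)

/-- The cone of `Π_n^+(Δ)` determined by `w`. -/
def CnP {n r : ℕ} (w : Option (Fin n) → Fin r → ℝ) :
    Set (Option (Fin n) → Fin r → ℝ) :=
  closure {w' | w' ∈ coneDP n r ∧ wEquiv w w'}

/-- The section `σ_i : cone(Δ^n) → cone(Δ × Δ^n)`. -/
def secD {n r : ℕ} (i : Fin n) (u : Fin n → Fin r → ℝ) :
    Option (Fin n) → Fin r → ℝ :=
  fun a => a.elim (u i) u

namespace Stmt17Aux


@[simp] lemma ordRel_lt (a b : ℝ) : ordRel .lt a b ↔ a ≤ b := Iff.rfl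
@[simp] lemma ordRel_eq (a b : ℝ) : ordRel .eq a b ↔ a = b := Iff.rfl
@[simp] lemma ordRel_gt (a b : ℝ) : ordRel .gt a b ↔ b ≤ a := Iff.rfl

variable {n r : ℕ}

lemma typeEquiv_refl (u : Fin n → Fin r → ℝ) : typeEquiv u u := fun _ => Iff.rfl
lemma typeEquiv_symm {u v : Fin n → Fin r → ℝ} (h : typeEquiv u v) : typeEquiv v u :=
  fun ε => (h ε).symm
lemma typeEquiv_trans {u v w : Fin n → Fin r → ℝ} (h : typeEquiv u v) (h' : typeEquiv v w) :
    typeEquiv u w := fun ε => (h ε).trans (h' ε)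

lemma cmp_transfer {u₀ u' : Fin n → Fin r → ℝ} (h₀ : u₀ ∈ coneD n r)
    (he : typeEquiv u₀ u') (i k : Fin n) (j : Fin r) :
    (u₀ i j = u₀ k j → u' i j = u' k j) ∧
    (u₀ i j < u₀ k j → u' i j ≤ u' k j) ∧
    (u₀ k j < u₀ i j → u' k j ≤ u' i j) := by
  classical
  set ε : Fin n → Fin r → Ordering := fun i' j' =>
    if i' = i then .eq else
      if u₀ i' j' = u₀ i j' then .eq else if u₀ i j' ≤ u₀ i' j' then .lt else .gt with hε
  have hc : cellNE u₀ ε := by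
    refine ⟨u₀ i, fun j' => h₀.1 i j', fun k' => h₀.2 i k', ?_⟩
    intro i' j'
    by_cases h1 : i' = i
    · subst h1; simp [hε]
    · by_cases h2 : u₀ i' j' = u₀ i j'
      · simp [hε, h1, h2]
      · by_cases h3 : u₀ i j' ≤ u₀ i' j'
        · simp [hε, h1, h2, h3]
        · simp [hε, h1, h2, h3]
          exact (not_le.mp h3).le
  obtain ⟨x, hx0, hxs, hxr⟩ := (he ε).mp hc
  have hxi : ∀ j', x j' = u' i j' := by
    intro j'
    have := hxr i j'
    simpa [hε] using this
  by_cases hki : k = i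
  · subst hki
    exact ⟨fun _ => rfl, fun h => absurd h (lt_irrefl _), fun h => absurd h (lt_irrefl _)⟩
  refine ⟨?_, ?_, ?_⟩
  · intro h
    have := hxr k j
    rw [hε] at this
    simp only [hki, if_false, h.symm, if_pos rfl] at this
    rw [← hxi j, this]
  · intro h
    have := hxr k j
    rw [hε] at this
    simp only [hki, if_false, (ne_of_gt h), if_neg (ne_of_gt h), if_pos h.le] at this
    rw [← hxi j]; exact this
  · intro h
    have := hxr k j
    rw [hε] at this
    simp only [hki, if_false, if_neg (ne_of_lt h), if_neg (not_le.mpr h)] at this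
    rw [← hxi j]; exact this

lemma le_transfer {u₀ u' : Fin n → Fin r → ℝ} (h₀ : u₀ ∈ coneD n r)
    (he : typeEquiv u₀ u') (i k : Fin n) (j : Fin r) :
    (u₀ i j ≤ u₀ k j → u' i j ≤ u' k j) ∧ (u₀ k j ≤ u₀ i j → u' k j ≤ u' i j) := by
  obtain ⟨h1, h2, h3⟩ := cmp_transfer h₀ he i k j
  constructor
  · intro h
    rcases h.lt_or_eq with h | h
    · exact h2 h
    · exact (h1 h).le
  · intro h
    rcases h.lt_or_eq with h | h
    · exact h3 h
    · exact (h1 h.symm).symm.le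

lemma le_iff {u₀ u' : Fin n → Fin r → ℝ} (h₀ : u₀ ∈ coneD n r) (h' : u' ∈ coneD n r)
    (he : typeEquiv u₀ u') (i k : Fin n) (j : Fin r) :
    (u₀ i j ≤ u₀ k j ↔ u' i j ≤ u' k j) ∧ (u₀ k j ≤ u₀ i j ↔ u' k j ≤ u' i j) :=
  ⟨⟨(le_transfer h₀ he i k j).1, (le_transfer h' (typeEquiv_symm he) i k j).1⟩,
   ⟨(le_transfer h₀ he i k j).2, (le_transfer h' (typeEquiv_symm he) i k j).2⟩⟩


variable {n r : ℕ}

instance : Fintype Ordering := ⟨{.lt, .eq, .gt}, by intro x; cases x <;> simp⟩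

/-- Perturbation `u' + t • u₀`. -/
def pertF (u' u₀ : Fin n → Fin r → ℝ) (t : ℝ) : Fin n → Fin r → ℝ :=
  fun k j => u' k j + t * u₀ k j

lemma cellNE_pert {u' u₀ : Fin n → Fin r → ℝ} {t : ℝ} (ht : 0 ≤ t)
    {ε : Fin n → Fin r → Ordering} (h1 : cellNE u' ε) (h2 : cellNE u₀ ε) :
    cellNE (pertF u' u₀ t) ε := by
  obtain ⟨x, hx0, hxs, hxr⟩ := h1
  obtain ⟨y, hy0, hys, hyr⟩ := h2
  refine ⟨fun j => x j + t * y j, fun j => add_nonneg (hx0 j) (mul_nonneg ht (hy0 j)), ?_, ?_⟩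
  · intro k
    simp only [pertF, Finset.sum_add_distrib, ← Finset.mul_sum, hxs k, hys k]
  · intro k j
    have hx := hxr k j
    have hy := hyr k j
    cases hεkj : ε k j <;> rw [hεkj] at hx hy
    · exact add_le_add hx (mul_le_mul_of_nonneg_left hy ht)
    · show x j + t * y j = pertF u' u₀ t k j
      have hx' : x j = u' k j := hx
      have hy' : y j = u₀ k j := hy
      rw [hx', hy']; rfl
    · exact add_le_add hx (mul_le_mul_of_nonneg_left hy ht)

lemma cellNE_stable (i : Fin n) (u' u₀ : Fin n → Fin r → ℝ)
    (h' : u' ∈ coneD n r) (h₀ : u₀ ∈ coneD n r) (ε : Fin n → Fin r → Ordering)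
    (hne : ¬ cellNE u' ε) :
    ∃ δ > 0, ∀ t : ℝ, 0 < t → t ≤ δ → ¬ cellNE (pertF u' u₀ t) ε := by
  set C : ℝ := (∑ j, u' i j) + (∑ j, u₀ i j) with hC
  set K : Set (ℝ × (Fin r → ℝ)) :=
    {p | p.1 ∈ Set.Icc (0:ℝ) 1 ∧ (∀ j, 0 ≤ p.2 j) ∧
      (∀ k, ∑ j, p.2 j = ∑ j, (u' k j + p.1 * u₀ k j)) ∧
      ∀ k j, ordRel (ε k j) (p.2 j) (u' k j + p.1 * u₀ k j)} with hKdef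
  have h1 : IsClosed {p : ℝ × (Fin r → ℝ) | p.1 ∈ Set.Icc (0:ℝ) 1} :=
    isClosed_Icc.preimage continuous_fst
  have h2 : IsClosed {p : ℝ × (Fin r → ℝ) | ∀ j, 0 ≤ p.2 j} := by
    rw [Set.setOf_forall]
    exact isClosed_iInter fun j =>
      isClosed_le continuous_const ((continuous_apply j).comp continuous_snd)
  have h3 : IsClosed {p : ℝ × (Fin r → ℝ) |
      ∀ k, ∑ j, p.2 j = ∑ j, (u' k j + p.1 * u₀ k j)} := by
    rw [Set.setOf_forall]
    refine isClosed_iInter fun k => isClosed_eq ?_ ?_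
    · exact continuous_finset_sum _ fun j _ => (continuous_apply j).comp continuous_snd
    · exact continuous_finset_sum _ fun j _ =>
        continuous_const.add (continuous_fst.mul continuous_const)
  have h4 : IsClosed {p : ℝ × (Fin r → ℝ) |
      ∀ k j, ordRel (ε k j) (p.2 j) (u' k j + p.1 * u₀ k j)} := by
    rw [Set.setOf_forall]
    refine isClosed_iInter fun k => ?_
    rw [Set.setOf_forall]
    refine isClosed_iInter fun j => ?_
    have hx : Continuous fun p : ℝ × (Fin r → ℝ) => p.2 j :=
      (continuous_apply j).comp continuous_snd
    have hy : Continuous fun p : ℝ × (Fin r → ℝ) => u' k j + p.1 * u₀ k j :=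
      continuous_const.add (continuous_fst.mul continuous_const)
    cases hεkj : ε k j
    · exact isClosed_le hx hy
    · exact isClosed_eq hx hy
    · exact isClosed_le hy hx
  have hKclosed : IsClosed K := h1.inter (h2.inter (h3.inter h4))
  have hKsub : K ⊆ Set.Icc (0:ℝ) 1 ×ˢ Set.Icc (0 : Fin r → ℝ) (fun _ => C) := by
    rintro p ⟨hp1, hp2, hp3, _⟩
    refine ⟨hp1, ?_, ?_⟩
    · intro j; exact hp2 j
    · intro j
      show p.2 j ≤ C
      calc p.2 j ≤ ∑ j', p.2 j' :=
            Finset.single_le_sum (fun j' _ => hp2 j') (Finset.mem_univ j)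
        _ = ∑ j', (u' i j' + p.1 * u₀ i j') := hp3 i
        _ ≤ ∑ j', (u' i j' + u₀ i j') := by
            refine Finset.sum_le_sum fun j' _ => ?_
            have : p.1 * u₀ i j' ≤ u₀ i j' :=
              mul_le_of_le_one_left (h₀.1 i j') hp1.2
            linarith
        _ = C := by rw [hC, Finset.sum_add_distrib]
  have hKcomp : IsCompact K :=
    (isCompact_Icc.prod isCompact_Icc).of_isClosed_subset hKclosed hKsub
  have himg : IsClosed (Prod.fst '' K) := (hKcomp.image continuous_fst).isClosed
  have h0 : (0:ℝ) ∉ Prod.fst '' K := by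
    rintro ⟨p, hp, hp0⟩
    refine hne ⟨p.2, hp.2.1, fun k => ?_, fun k j => ?_⟩
    · have := hp.2.2.1 k; rw [hp0] at this; simpa using this
    · have := hp.2.2.2 k j; rw [hp0] at this; simpa using this
  obtain ⟨δ, hδ, hball⟩ := Metric.isOpen_iff.mp himg.isOpen_compl 0 h0
  refine ⟨min (δ/2) 1, by positivity, ?_⟩
  intro t ht1 ht2 hc
  obtain ⟨x, hx0, hxs, hxr⟩ := hc
  have hmem : (t, x) ∈ K := by
    refine ⟨⟨ht1.le, ht2.trans (min_le_right _ _)⟩, hx0, fun k => hxs k, fun k j => hxr k j⟩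
  have htm : t ∈ Prod.fst '' K := ⟨(t, x), hmem, rfl⟩
  have htball : t ∈ Metric.ball (0:ℝ) δ := by
    simp only [Metric.mem_ball, Real.dist_eq, sub_zero, abs_of_pos ht1]
    have := ht2.trans (min_le_left _ _)
    linarith
  exact hball htball htm

lemma pert_mem (u u' u₀ : Fin n → Fin r → ℝ) (i : Fin n)
    (h'1 : u' ∈ coneD n r) (h'2 : typeEquiv u u')
    (h01 : u₀ ∈ coneD n r) (h02 : typeEquiv u u₀) :
    ∃ δ > 0, ∀ t : ℝ, 0 < t → t ≤ δ →
      pertF u' u₀ t ∈ coneD n r ∧ typeEquiv u (pertF u' u₀ t) := by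
  classical
  have hd : ∀ ε : Fin n → Fin r → Ordering, ∃ δ > 0,
      ¬ cellNE u' ε → ∀ t : ℝ, 0 < t → t ≤ δ → ¬ cellNE (pertF u' u₀ t) ε := by
    intro ε
    by_cases h : cellNE u' ε
    · exact ⟨1, one_pos, fun hc => absurd h hc⟩
    · obtain ⟨δ, hδ, hp⟩ := cellNE_stable i u' u₀ h'1 h01 ε h
      exact ⟨δ, hδ, fun _ => hp⟩
  choose d hd1 hd2 using hd
  have hnE : (Finset.univ : Finset (Fin n → Fin r → Ordering)).Nonempty :=
    ⟨fun _ _ => .eq, Finset.mem_univ _⟩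
  refine ⟨Finset.univ.inf' hnE d, Finset.lt_inf'_iff hnE |>.mpr fun ε _ => hd1 ε, ?_⟩
  intro t ht1 ht2
  constructor
  · constructor
    · intro k j
      exact add_nonneg (h'1.1 k j) (mul_nonneg ht1.le (h01.1 k j))
    · intro k k'
      have e : ∀ k, ∑ j, pertF u' u₀ t k j = (∑ j, u' k j) + t * ∑ j, u₀ k j := by
        intro k
        simp only [pertF, Finset.sum_add_distrib, ← Finset.mul_sum]
      rw [e, e, h'1.2 k k', h01.2 k k']
  · intro ε
    by_cases hcu : cellNE u ε
    · exact iff_of_true hcu (cellNE_pert ht1.le ((h'2 ε).mp hcu) ((h02 ε).mp hcu))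
    · have h'n : ¬ cellNE u' ε := fun hc => hcu ((h'2 ε).mpr hc)
      have hbad := hd2 ε h'n t ht1 (ht2.trans (Finset.inf'_le d (Finset.mem_univ ε)))
      exact iff_of_false hcu hbad


lemma secD_mem_coneDP (i : Fin n) {v : Fin n → Fin r → ℝ} (hv : v ∈ coneD n r) :
    secD i v ∈ coneDP n r := by
  constructor
  · intro a j; cases a
    · exact hv.1 i j
    · exact hv.1 _ j
  · intro a b; cases a <;> cases b
    · exact hv.2 i i
    · exact hv.2 i _
    · exact hv.2 _ i
    · exact hv.2 _ _

end Stmt17Aux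

theorem stmt17 (n r : ℕ) (u : Fin n → Fin r → ℝ) (hu : u ∈ coneD n r)
    (ubar : Fin n → Fin r → ℝ) (hbar : ∀ i, ubar i ∈ stdSimplex ℝ (Fin r))
    -- the ray `cone(ρ)` over `ū` is a face of the cone `Cn u` of `Π_n(Δ)`
    (hray : ubar ∈ Cn u) (i : Fin n) :
    -- the image of the section `σ_i` over the cone is a cone of `Π_n^+(Δ)` …
    (∃ w ∈ coneDP n r, secD i '' Cn u = CnP w) ∧
    -- … mapping isomorphically under `p` onto the cone
    Set.BijOn projP (secD i '' Cn u) (Cn u) ∧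
    -- it contains a unique point over `ū`
    (∃! q : Option (Fin n) → Fin r → ℝ, q ∈ secD i '' Cn u ∧ projP q = ubar) ∧
    -- whose `x`-component is the vertex `ψ(u_i) = ū_i`
    (∀ q : Option (Fin n) → Fin r → ℝ,
        q ∈ secD i '' Cn u → projP q = ubar → q none = ubar i) ∧
    -- the labels of the marked vertices in `ψ^{-1}(v)` are exactly `I_v`
    (∀ v : Fin r → ℝ,
        {l : Fin n | ∃ q : Option (Fin n) → Fin r → ℝ,
            q ∈ secD l '' Cn u ∧ projP q = ubar ∧ q none = v}
          = {l : Fin n | ubar l = v}) := by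
  classical
  have hconj1 : ∃ w ∈ coneDP n r, secD i '' Cn u = CnP w := by
    set Zm : Set ℕ :=
      {k | ∃ v, (v ∈ coneD n r ∧ typeEquiv u v) ∧ Set.ncard {j | v i j = 0} = k} with hZm
    have hZne : Zm.Nonempty := ⟨_, u, ⟨hu, Stmt17Aux.typeEquiv_refl u⟩, rfl⟩
    obtain ⟨u₀, ⟨hu₀D, hu₀E⟩, hu₀card⟩ := Nat.sInf_mem hZne
    set S₀ : Set (Fin n → Fin r → ℝ) :=
      {v | v ∈ coneD n r ∧ typeEquiv u₀ v ∧ ∀ j, (v i j = 0 ↔ u₀ i j = 0)} with hS₀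
    have hS₀T : S₀ ⊆ {u' | u' ∈ coneD n r ∧ typeEquiv u u'} := by
      rintro v ⟨hv1, hv2, _⟩
      exact ⟨hv1, Stmt17Aux.typeEquiv_trans hu₀E hv2⟩
    have hTS₀ : {u' | u' ∈ coneD n r ∧ typeEquiv u u'} ⊆ closure S₀ := by
      rintro v ⟨hvD, hvE⟩
      obtain ⟨δ, hδ, hp⟩ := Stmt17Aux.pert_mem u v u₀ i hvD hvE hu₀D hu₀E
      have htend : Filter.Tendsto (fun t : ℝ => Stmt17Aux.pertF v u₀ t)
          (nhdsWithin 0 (Set.Ioi 0)) (nhds v) := by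
        have hcont : Continuous fun t : ℝ => Stmt17Aux.pertF v u₀ t :=
          continuous_pi fun k => continuous_pi fun j =>
            continuous_const.add (continuous_id.mul continuous_const)
        have h0 : Stmt17Aux.pertF v u₀ 0 = v := by
          funext k j; simp [Stmt17Aux.pertF]
        have h1 := hcont.tendsto 0
        rw [h0] at h1
        exact h1.mono_left nhdsWithin_le_nhds
      refine mem_closure_of_tendsto htend ?_
      refine Filter.eventually_of_mem (Ioc_mem_nhdsGT_of_mem ⟨le_refl (0:ℝ), hδ⟩) ?_
      rintro t ⟨ht1, ht2⟩
      obtain ⟨hpD, hpE⟩ := hp t ht1 ht2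
      have hsub : {j | Stmt17Aux.pertF v u₀ t i j = 0} ⊆ {j | u₀ i j = 0} := by
        intro j hj
        have h1 : 0 ≤ v i j := hvD.1 i j
        have h2 : 0 ≤ t * u₀ i j := mul_nonneg ht1.le (hu₀D.1 i j)
        have hj' : v i j + t * u₀ i j = 0 := hj
        have h3 : t * u₀ i j = 0 := by linarith
        rcases mul_eq_zero.mp h3 with h | h
        · exact absurd h (ne_of_gt ht1)
        · exact h
      have hcard : Set.ncard {j | u₀ i j = 0}
          ≤ Set.ncard {j | Stmt17Aux.pertF v u₀ t i j = 0} := by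
        rw [hu₀card]
        exact Nat.sInf_le ⟨Stmt17Aux.pertF v u₀ t, ⟨hpD, hpE⟩, rfl⟩
      have hpat := Set.eq_of_subset_of_ncard_le hsub hcard (Set.toFinite _)
      exact ⟨hpD, Stmt17Aux.typeEquiv_trans (Stmt17Aux.typeEquiv_symm hu₀E) hpE,
        fun j => Set.ext_iff.mp hpat j⟩
    have hclos : closure {u' | u' ∈ coneD n r ∧ typeEquiv u u'} = closure S₀ :=
      le_antisymm (closure_minimal hTS₀ isClosed_closure) (closure_mono hS₀T)
    have hemb : Topology.IsClosedEmbedding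
        (secD i : (Fin n → Fin r → ℝ) → (Option (Fin n) → Fin r → ℝ)) := by
      let L : (Fin n → Fin r → ℝ) →ₗ[ℝ] (Option (Fin n) → Fin r → ℝ) :=
        { toFun := secD i
          map_add' := by intro a b; funext o; cases o <;> rfl
          map_smul' := by intro c a; funext o; cases o <;> rfl }
      have hinj : Function.Injective (secD i : (Fin n → Fin r → ℝ) → _) := by
        intro a b h
        funext k j
        exact congrFun (congrFun h (some k)) j
      exact L.isClosedEmbedding_of_injective (LinearMap.ker_eq_bot.mpr hinj)
    have hclass : {w' | w' ∈ coneDP n r ∧ wEquiv (secD i u₀) w'} = secD i '' S₀ := by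
      ext w'
      constructor
      · rintro ⟨hDP, hE1, hE2, hE3⟩
        set v := projP w' with hv
        have hvD : v ∈ coneD n r := ⟨fun k j => hDP.1 _ _, fun k k' => hDP.2 _ _⟩
        have hvE : typeEquiv u₀ v := hE1
        have hne : ∀ j, w' none j = v i j := by
          intro j
          have ha : w' none j ≤ w' (some i) j := (hE3 i j).1.mp (le_refl _)
          have hb : w' (some i) j ≤ w' none j := (hE3 i j).2.mp (le_refl _)
          exact le_antisymm ha hb
        refine ⟨v, ⟨hvD, hvE, ?_⟩, ?_⟩
        · intro j
          have h2 := hE2 j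
          rw [hne j] at h2
          exact h2.symm
        · funext a
          cases a with
          | none => funext j; exact (hne j).symm
          | some k => rfl
      · rintro ⟨v, ⟨hvD, hvE, hvz⟩, rfl⟩
        refine ⟨Stmt17Aux.secD_mem_coneDP i hvD, hvE, fun j => (hvz j).symm, fun k j => ?_⟩
        exact Stmt17Aux.le_iff hu₀D hvD hvE i k j
    refine ⟨secD i u₀, Stmt17Aux.secD_mem_coneDP i hu₀D, ?_⟩
    rw [CnP, hclass, hemb.closure_image_eq, ← hclos]
    rfl
  refine ⟨hconj1, ⟨?_, ?_, ?_⟩, ?_, ?_, ?_⟩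
  · rintro q ⟨x, hx, rfl⟩
    exact hx
  · rintro q ⟨x, hx, rfl⟩ q' ⟨x', hx', rfl⟩ hpq
    have h : x = x' := hpq
    rw [h]
  · intro x hx
    exact ⟨secD i x, ⟨x, hx, rfl⟩, rfl⟩
  · refine ⟨secD i ubar, ⟨⟨ubar, hray, rfl⟩, rfl⟩, ?_⟩
    rintro q ⟨⟨x, hx, rfl⟩, hpq⟩
    have h : x = ubar := hpq
    rw [h]
  · rintro q ⟨x, hx, rfl⟩ hpq
    have h : x = ubar := hpq
    subst h
    rfl
  · intro v
    ext l
    simp only [Set.mem_setOf_eq]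
    constructor
    · rintro ⟨q, ⟨x, hx, rfl⟩, hpq, hnone⟩
      have h : x = ubar := hpq
      subst h
      exact hnone
    · intro h
      exact ⟨secD l ubar, ⟨ubar, hray, rfl⟩, rfl, h⟩
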